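/- Let N, c be positive integers, d = gcd(N,c), and let k, l be integers with gcd(k, d) = gcd(l, d). Then the sets {gcd(N, k + c·i) : i ∈ ℤ} and {gcd(N, l + c·i) : i ∈ ℤ} are equal. -/

import Mathlib

private lemma gcd_add_mul_aux (a b t : ℤ) : Int.gcd a (b + a * t) = Int.gcd a b := by
  apply Nat.dvd_antisymm
  · rw [← Int.natCast_dvd_natCast]
    refine Int.dvd_coe_gcd (Int.gcd_dvd_left _ _) ?_
    have h1 : (Int.gcd a (b + a * t) : ℤ) ∣ b + a * t := (Int.gcd_dvd_right _ _)
    have h2 : (Int.gcd a (b + a * t) : ℤ) ∣ a := (Int.gcd_dvd_left _ _)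
    have h3 := dvd_sub h1 (h2.mul_right t)
    simpa using h3
  · rw [← Int.natCast_dvd_natCast]
    exact Int.dvd_coe_gcd (Int.gcd_dvd_left _ _)
      (dvd_add (Int.gcd_dvd_right _ _) ((Int.gcd_dvd_left _ _).mul_right t))

private lemma exists_j (N c : ℤ) (hN : 0 < N) (hc : 0 < c) (k l : ℤ)
    (h : Int.gcd k (Int.gcd N c) = Int.gcd l (Int.gcd N c)) (i : ℤ) :
    ∃ j : ℤ, Int.gcd N (l + c * j) = Int.gcd N (k + c * i) := by
  classical
  set x : ℤ := k + c * i with hx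
  set n : ℕ := N.natAbs with hn
  set dn : ℕ := Int.gcd N c with hdn
  set gn : ℕ := Int.gcd N x with hgn
  have hnpos : 0 < n := Int.natAbs_pos.mpr hN.ne'
  haveI : NeZero n := ⟨hnpos.ne'⟩
  have hdnpos : 0 < dn := Int.gcd_pos_of_ne_zero_left c hN.ne'
  have hdN : (dn : ℤ) ∣ N := (Int.gcd_dvd_left _ _)
  have hdc : (dn : ℤ) ∣ c := (Int.gcd_dvd_right _ _)
  have hgNn : gn ∣ n := by
    have : (gn : ℤ) ∣ N := (Int.gcd_dvd_left _ _)
    rwa [← Int.natCast_dvd_natCast, Int.natCast_natAbs, abs_of_pos hN]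
  -- key: gcd gn dn = gcd l.natAbs dn
  obtain ⟨c0, hc0⟩ := hdc
  have hxk : Int.gcd x (dn : ℤ) = Int.gcd k (dn : ℤ) := by
    rw [hx, Int.gcd_comm, hc0]
    have : k + (dn : ℤ) * c0 * i = k + (dn : ℤ) * (c0 * i) := by ring
    rw [this, gcd_add_mul_aux, Int.gcd_comm]
  have hen : Nat.gcd gn dn = Nat.gcd l.natAbs dn := by
    have h1 : Nat.gcd gn dn = Nat.gcd n (Nat.gcd x.natAbs dn) := by
      rw [hgn, Int.gcd, ← hn, Nat.gcd_assoc]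
    have h2 : Nat.gcd n dn = dn := by
      have : dn ∣ n := by
        rw [← Int.natCast_dvd_natCast, Int.natCast_natAbs, abs_of_pos hN]; exact hdN
      exact Nat.gcd_eq_right this
    have h3 : Nat.gcd gn dn = Nat.gcd x.natAbs dn := by
      rw [h1, Nat.gcd_comm x.natAbs dn, ← Nat.gcd_assoc, h2, Nat.gcd_comm]
    rw [h3]
    have : Nat.gcd x.natAbs dn = Int.gcd x (dn : ℤ) := by
      rw [Int.gcd, Int.natAbs_natCast]
    rw [this, hxk]
    have hk : Int.gcd k (dn : ℤ) = Int.gcd l (dn : ℤ) := by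
      simpa [Int.gcd, Int.natAbs_natCast, hdn] using h
    rw [hk, Int.gcd, Int.natAbs_natCast]
  set en : ℕ := Nat.gcd gn dn with henn
  have henpos : 0 < en := Nat.gcd_pos_of_pos_right _ hdnpos
  set g' : ℕ := gn / en with hg'
  set d' : ℕ := dn / en with hd'
  set l' : ℕ := l.natAbs / en with hl'
  have hcop1 : Nat.Coprime g' d' := Nat.coprime_div_gcd_div_gcd henpos
  have hcop2 : Nat.Coprime l' d' := by
    have : 0 < Nat.gcd l.natAbs dn := by rwa [← hen]
    have h' := Nat.coprime_div_gcd_div_gcd this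
    rwa [← hen] at h'
  have hend : en ∣ dn := Nat.gcd_dvd_right _ _
  have heng : en ∣ gn := Nat.gcd_dvd_left _ _
  have henl : en ∣ l.natAbs := hen ▸ Nat.gcd_dvd_left _ _
  have hd'n : d' ∣ n := dvd_trans (hd' ▸ Nat.div_dvd_of_dvd hend) (by
    rw [← Int.natCast_dvd_natCast, Int.natCast_natAbs, abs_of_pos hN]; exact hdN)
  -- find u coprime to n with g' * u ≡ l' [MOD d']
  obtain ⟨U, hU⟩ := ZMod.unitsMap_surjective hd'n
    ((ZMod.unitOfCoprime g' hcop1)⁻¹ * ZMod.unitOfCoprime l' hcop2)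
  set u : ℕ := (U : ZMod n).val with hu
  have hun : Nat.Coprime u n := ZMod.val_coe_unit_coprime U
  have hmod : (g' * u : ℕ) ≡ l' [MOD d'] := by
    rw [← ZMod.natCast_eq_natCast_iff]
    push_cast
    have hcast : ((U : ZMod n).val : ZMod d') = ZMod.castHom hd'n (ZMod d') (U : ZMod n) := by
      rw [ZMod.natCast_val]
      rfl
    have hUcoe : ZMod.castHom hd'n (ZMod d') (U : ZMod n)
        = (((ZMod.unitOfCoprime g' hcop1)⁻¹ * ZMod.unitOfCoprime l' hcop2 : (ZMod d')ˣ) : ZMod d') := by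
      rw [← hU, ZMod.unitsMap_def]
      rfl
    rw [← hu] at hcast
    rw [hcast, hUcoe]
    have h1 : ((g' : ZMod d')) * ↑(ZMod.unitOfCoprime g' hcop1)⁻¹ = 1 := by
      rw [← ZMod.coe_unitOfCoprime g' hcop1]
      exact Units.mul_inv _
    rw [Units.val_mul, ← mul_assoc, h1, one_mul, ZMod.coe_unitOfCoprime]
  have hdvd0 : (d' : ℤ) ∣ ((l' : ℤ) - (g' * u : ℕ)) := (Nat.modEq_iff_dvd).mp hmod
  have hdvd : (dn : ℤ) ∣ ((gn * u : ℕ) : ℤ) - l.natAbs := by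
    have e1 : (dn : ℤ) = en * d' := by
      exact_mod_cast (Nat.mul_div_cancel' hend).symm
    have e2 : ((gn * u : ℕ) : ℤ) - l.natAbs = (en : ℤ) * ((g' * u : ℕ) - (l' : ℤ)) := by
      have A : (gn : ℤ) = en * g' := by exact_mod_cast (Nat.mul_div_cancel' heng).symm
      have B : (l.natAbs : ℤ) = en * l' := by exact_mod_cast (Nat.mul_div_cancel' henl).symm
      rw [Nat.cast_mul, Nat.cast_mul, A, B]; ring
    rw [e2, e1]
    exact mul_dvd_mul_left (en : ℤ) (dvd_neg.mp (by simpa using hdvd0.neg_right) |>.neg_right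
      |> fun _ => by exact (dvd_sub_comm.mp hdvd0))
  -- gcd N (gn * u) = gn
  have hgcd0 : Int.gcd N ((gn * u : ℕ) : ℤ) = gn := by
    rw [Int.gcd, Int.natAbs_natCast, ← hn]
    rw [Nat.Coprime.gcd_mul_right_cancel_right gn hun]
    exact Nat.gcd_eq_right hgNn
  -- choose y with correct sign
  obtain ⟨y, hy1, hy2⟩ : ∃ y : ℤ, Int.gcd N y = gn ∧ (dn : ℤ) ∣ y - l := by
    rcases le_or_gt 0 l with hl0 | hl0
    · refine ⟨((gn * u : ℕ) : ℤ), hgcd0, ?_⟩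
      rwa [← Int.natAbs_of_nonneg hl0]
    · refine ⟨-((gn * u : ℕ) : ℤ), by rw [Int.gcd, Int.natAbs_neg, ← Int.gcd]; exact hgcd0, ?_⟩
      have : -((gn * u : ℕ) : ℤ) - l = -(((gn * u : ℕ) : ℤ) - l.natAbs) := by
        rw [Int.ofNat_natAbs_of_nonpos hl0.le]; ring
      rw [this]
      exact hdvd.neg_right
  -- produce j
  obtain ⟨m, hm⟩ := hy2
  refine ⟨m * Int.gcdB N c, ?_⟩
  have hbezout : (dn : ℤ) = N * Int.gcdA N c + c * Int.gcdB N c := Int.gcd_eq_gcd_ab N c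
  have : l + c * (m * Int.gcdB N c) = y + N * (-(Int.gcdA N c * m)) := by
    have : y = l + (dn : ℤ) * m := by linarith [hm]
    rw [this, hbezout]; ring
  rw [this, gcd_add_mul_aux]
  exact hy1

/-- If `d = gcd(N, c)` and `gcd(k, d) = gcd(l, d)`, then the sets
`{gcd(N, k + c·i) : i ∈ ℤ}` and `{gcd(N, l + c·i) : i ∈ ℤ}` coincide. -/
theorem gcd_value_sets_eq (N c : ℤ) (hN : 0 < N) (hc : 0 < c) (k l : ℤ)
    (h : Int.gcd k (Int.gcd N c) = Int.gcd l (Int.gcd N c)) :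
    {g : ℕ | ∃ i : ℤ, Int.gcd N (k + c * i) = g} =
      {g : ℕ | ∃ i : ℤ, Int.gcd N (l + c * i) = g} := by
  ext g
  simp only [Set.mem_setOf_eq]
  constructor
  · rintro ⟨i, rfl⟩
    exact exists_j N c hN hc k l h i
  · rintro ⟨i, rfl⟩
    exact exists_j N c hN hc l k h.symm i
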